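/- arXiv:2004.10708 — 4 statements merged into one kernel-verified Lean document; each statement's English description precedes it below -/
import Mathlib

section
/- Let X be a square matrix, Y a positive definite matrix, and L a linear operator (possibly rectangular). Then L X† L† (L Y L†)⁻¹ L X L† ≤ L X† Y⁻¹ X L†, where the inverse (L Y L†)⁻¹ is the generalized (Moore–Penrose) inverse taken on the range of L Y L†. Moreover, if L is invertible, equality holds. -/
open Matrix
open scoped ComplexOrder

/-- Functional calculus for Hermitian matrices: apply `f` to the eigenvalues. -/
noncomputable def matFun {d : Type*} [Fintype d] [DecidableEq d]
    (A : Matrix d d ℂ) (f : ℝ → ℝ) : Matrix d d ℂ :=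
  if hA : A.IsHermitian then
    (hA.eigenvectorUnitary : Matrix d d ℂ) *
      Matrix.diagonal (fun i => (f (hA.eigenvalues i) : ℂ)) *
      (star hA.eigenvectorUnitary : Matrix d d ℂ)
  else 0

/-- Generalized (Moore–Penrose) inverse of a Hermitian matrix, taken on its support. -/
noncomputable def ginv {d : Type*} [Fintype d] [DecidableEq d]
    (A : Matrix d d ℂ) : Matrix d d ℂ :=
  matFun A (fun x => x⁻¹)
section aux
variable {d : Type*} [Fintype d] [DecidableEq d] {A : Matrix d d ℂ}

lemma ginv_eq (hA : A.IsHermitian) :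
    ginv A = (hA.eigenvectorUnitary : Matrix d d ℂ) *
      Matrix.diagonal (fun i => (((hA.eigenvalues i)⁻¹ : ℝ) : ℂ)) *
      (star hA.eigenvectorUnitary : Matrix d d ℂ) := by
  rw [ginv, matFun, dif_pos hA]

lemma sandwich_mul_self (hA : A.IsHermitian) (c e : d → ℂ) :
    ((hA.eigenvectorUnitary : Matrix d d ℂ) * Matrix.diagonal c *
      (star hA.eigenvectorUnitary : Matrix d d ℂ)) * A *
    ((hA.eigenvectorUnitary : Matrix d d ℂ) * Matrix.diagonal e *
      (star hA.eigenvectorUnitary : Matrix d d ℂ)) =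
    (hA.eigenvectorUnitary : Matrix d d ℂ) *
      Matrix.diagonal (fun i => c i * (hA.eigenvalues i : ℂ) * e i) *
      (star hA.eigenvectorUnitary : Matrix d d ℂ) := by
  have h2 := hA.conjStarAlgAut_star_eigenvectorUnitary
  rw [Unitary.conjStarAlgAut_star_apply] at h2
  have hd : Matrix.diagonal c * Matrix.diagonal (RCLike.ofReal ∘ hA.eigenvalues) *
      Matrix.diagonal e = Matrix.diagonal (fun i => c i * (hA.eigenvalues i : ℂ) * e i) := by
    rw [Matrix.diagonal_mul_diagonal, Matrix.diagonal_mul_diagonal]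
    rfl
  calc ((hA.eigenvectorUnitary : Matrix d d ℂ) * Matrix.diagonal c *
      (star hA.eigenvectorUnitary : Matrix d d ℂ)) * A *
    ((hA.eigenvectorUnitary : Matrix d d ℂ) * Matrix.diagonal e *
      (star hA.eigenvectorUnitary : Matrix d d ℂ))
      = (hA.eigenvectorUnitary : Matrix d d ℂ) * (Matrix.diagonal c *
        ((star hA.eigenvectorUnitary : Matrix d d ℂ) * A *
          (hA.eigenvectorUnitary : Matrix d d ℂ)) * Matrix.diagonal e) *
        (star hA.eigenvectorUnitary : Matrix d d ℂ) := by
        simp only [mul_assoc]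
    _ = _ := by rw [h2, hd]

lemma ginv_mul_eq (hA : A.IsHermitian) :
    ginv A * A = (hA.eigenvectorUnitary : Matrix d d ℂ) *
      Matrix.diagonal (fun i => (((hA.eigenvalues i)⁻¹ : ℝ) : ℂ) * (hA.eigenvalues i : ℂ)) *
      (star hA.eigenvectorUnitary : Matrix d d ℂ) := by
  have h2 := hA.conjStarAlgAut_star_eigenvectorUnitary
  rw [Unitary.conjStarAlgAut_star_apply] at h2
  have hUU : (hA.eigenvectorUnitary : Matrix d d ℂ) *
      (star hA.eigenvectorUnitary : Matrix d d ℂ) = 1 :=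
    (Matrix.mem_unitaryGroup_iff).mp hA.eigenvectorUnitary.2
  have h3 : (star hA.eigenvectorUnitary : Matrix d d ℂ) * A =
      Matrix.diagonal (RCLike.ofReal ∘ hA.eigenvalues) *
        (star hA.eigenvectorUnitary : Matrix d d ℂ) := by
    calc (star hA.eigenvectorUnitary : Matrix d d ℂ) * A
        = ((star hA.eigenvectorUnitary : Matrix d d ℂ) * A *
            (hA.eigenvectorUnitary : Matrix d d ℂ)) *
          (star hA.eigenvectorUnitary : Matrix d d ℂ) := by
          rw [mul_assoc, mul_assoc, hUU, mul_one]
      _ = _ := by rw [h2]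
  rw [ginv_eq hA, mul_assoc, mul_assoc, h3, ← mul_assoc, ← mul_assoc,
    mul_assoc _ _ (Matrix.diagonal (RCLike.ofReal ∘ hA.eigenvalues)),
    Matrix.diagonal_mul_diagonal]
  rfl

lemma ginv_conjTranspose (hA : A.IsHermitian) : (ginv A)ᴴ = ginv A := by
  rw [ginv_eq hA]
  simp only [Matrix.conjTranspose_mul, Matrix.diagonal_conjTranspose,
    Matrix.conjTranspose_conjTranspose, Matrix.star_eq_conjTranspose]
  have : (star fun i => (((hA.eigenvalues i)⁻¹ : ℝ) : ℂ)) =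
      fun i => (((hA.eigenvalues i)⁻¹ : ℝ) : ℂ) := by
    ext i; simp [Complex.conj_ofReal]
  rw [this, ← mul_assoc]

lemma ginv_mul_self_mul_ginv (hA : A.IsHermitian) : ginv A * A * ginv A = ginv A := by
  rw [ginv_eq hA, sandwich_mul_self hA]
  have hfun : (fun i => (((hA.eigenvalues i)⁻¹ : ℝ) : ℂ) * (hA.eigenvalues i : ℂ) *
      (((hA.eigenvalues i)⁻¹ : ℝ) : ℂ)) = fun i => (((hA.eigenvalues i)⁻¹ : ℝ) : ℂ) := by
    funext i
    rcases eq_or_ne (hA.eigenvalues i) 0 with h | h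
    · simp [h]
    · rw [← Complex.ofReal_mul, ← Complex.ofReal_mul, inv_mul_cancel₀ h, one_mul]
  rw [hfun]

lemma ginv_mul_of_posDef (hA : A.PosDef) : ginv A * A = 1 := by
  rw [ginv_mul_eq hA.1]
  have : (fun i => (((hA.1.eigenvalues i)⁻¹ : ℝ) : ℂ) * ((hA.1.eigenvalues i : ℝ) : ℂ)) =
      fun _ => (1 : ℂ) := by
    ext i
    rw [← Complex.ofReal_mul, inv_mul_cancel₀ (hA.eigenvalues_pos i).ne', Complex.ofReal_one]
  rw [this, Matrix.diagonal_one, mul_one]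
  exact (Matrix.mem_unitaryGroup_iff).mp hA.1.eigenvectorUnitary.2

end aux

lemma ginv_mul_of_isUnit {d : Type*} [Fintype d] [DecidableEq d] {A : Matrix d d ℂ}
    (hA : A.IsHermitian) (hdet : IsUnit A.det) : ginv A * A = 1 := by
  rw [ginv_mul_eq hA]
  have hne : ∀ i, hA.eigenvalues i ≠ 0 := by
    intro i hi
    have hd := hA.det_eq_prod_eigenvalues
    rw [hd] at hdet
    rw [isUnit_iff_ne_zero] at hdet
    exact hdet (Finset.prod_eq_zero (Finset.mem_univ i) (by rw [hi]; simp))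
  have : (fun i => (((hA.eigenvalues i)⁻¹ : ℝ) : ℂ) * ((hA.eigenvalues i : ℝ) : ℂ)) =
      fun _ => (1 : ℂ) := by
    ext i
    rw [← Complex.ofReal_mul, inv_mul_cancel₀ (hne i), Complex.ofReal_one]
  rw [this, Matrix.diagonal_one, mul_one]
  exact (Matrix.mem_unitaryGroup_iff).mp hA.eigenvectorUnitary.2

/-- **Transformer inequality.** For square `X`, positive definite `Y`, and any `L`,
`L Xᴴ Lᴴ (L Y Lᴴ)⁻¹ L X Lᴴ ≤ L Xᴴ Y⁻¹ X Lᴴ` in the Loewner order, where the inverse of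
`L Y Lᴴ` is the generalized inverse on its range; if `L` is invertible, equality holds. -/
theorem transformer_inequality {n : ℕ}
    (X Y : Matrix (Fin n) (Fin n) ℂ) (hY : Y.PosDef) :
    (∀ {m : ℕ} (L : Matrix (Fin m) (Fin n) ℂ),
      (L * Xᴴ * Y⁻¹ * X * Lᴴ -
        (L * Xᴴ * Lᴴ) * ginv (L * Y * Lᴴ) * (L * X * Lᴴ)).PosSemidef) ∧
    (∀ L : Matrix (Fin n) (Fin n) ℂ, IsUnit L →
      (L * Xᴴ * Lᴴ) * ginv (L * Y * Lᴴ) * (L * X * Lᴴ) = L * Xᴴ * Y⁻¹ * X * Lᴴ) := by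
  have hYps := hY.posSemidef
  set S := (open scoped MatrixOrder in CFC.sqrt Y) with hSdef
  have hS : S.PosSemidef := by open scoped MatrixOrder in exact (CFC.sqrt_nonneg Y).posSemidef
  have hSS : S * S = Y := by open scoped MatrixOrder in exact CFC.sqrt_mul_sqrt_self Y hYps.nonneg
  have hSH : Sᴴ = S := hS.1
  have hYdu : IsUnit Y.det := (Matrix.isUnit_iff_isUnit_det Y).mp hY.isUnit
  have hSdu : IsUnit S.det := by
    have h : S.det * S.det = Y.det := by rw [← Matrix.det_mul, hSS]
    exact isUnit_of_mul_isUnit_left (h ▸ hYdu)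
  have hSi : S * S⁻¹ = 1 := Matrix.mul_nonsing_inv S hSdu
  have hiS : S⁻¹ * S = 1 := Matrix.nonsing_inv_mul S hSdu
  have hSiH : (S⁻¹)ᴴ = S⁻¹ := by rw [Matrix.conjTranspose_nonsing_inv, hSH]
  have hYi : Y⁻¹ = S⁻¹ * S⁻¹ := by rw [← hSS, Matrix.mul_inv_rev]
  -- shared facts, parametrized over m and L
  have hBH : ∀ {m : ℕ} (L : Matrix (Fin m) (Fin n) ℂ), (L * Y * Lᴴ).IsHermitian := by
    intro m L
    rw [Matrix.IsHermitian]
    simp [Matrix.conjTranspose_mul, Matrix.mul_assoc, hY.1.eq]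
  have hPP : ∀ {m : ℕ} (L : Matrix (Fin m) (Fin n) ℂ),
      (L * S) * (S * Lᴴ) = L * Y * Lᴴ := by
    intro m L
    rw [← hSS]
    simp [Matrix.mul_assoc]
  have hPH : ∀ {m : ℕ} (L : Matrix (Fin m) (Fin n) ℂ), (S * Lᴴ)ᴴ = L * S := by
    intro m L
    rw [Matrix.conjTranspose_mul, hSH, Matrix.conjTranspose_conjTranspose]
  have hMH : ∀ {m : ℕ} (L : Matrix (Fin m) (Fin n) ℂ),
      (S⁻¹ * X * Lᴴ)ᴴ = L * Xᴴ * S⁻¹ := by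
    intro m L
    simp [Matrix.conjTranspose_mul, hSiH, Matrix.mul_assoc]
  have hMPH : ∀ {m : ℕ} (L : Matrix (Fin m) (Fin n) ℂ),
      (L * Xᴴ * S⁻¹) * (S * Lᴴ) = L * Xᴴ * Lᴴ := by
    intro m L
    calc L * Xᴴ * S⁻¹ * (S * Lᴴ) = L * Xᴴ * (S⁻¹ * S) * Lᴴ := by
          simp only [Matrix.mul_assoc]
      _ = L * Xᴴ * Lᴴ := by rw [hiS, Matrix.mul_one]
  have hPM : ∀ {m : ℕ} (L : Matrix (Fin m) (Fin n) ℂ),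
      (L * S) * (S⁻¹ * X * Lᴴ) = L * X * Lᴴ := by
    intro m L
    calc L * S * (S⁻¹ * X * Lᴴ) = L * (S * S⁻¹) * (X * Lᴴ) := by
          simp only [Matrix.mul_assoc]
      _ = L * X * Lᴴ := by rw [hSi, Matrix.mul_one, Matrix.mul_assoc]
  have hMM : ∀ {m : ℕ} (L : Matrix (Fin m) (Fin n) ℂ),
      (L * Xᴴ * S⁻¹) * (S⁻¹ * X * Lᴴ) = L * Xᴴ * Y⁻¹ * X * Lᴴ := by
    intro m L
    rw [hYi]
    simp only [Matrix.mul_assoc]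
  have hMid : ∀ {m : ℕ} (L : Matrix (Fin m) (Fin n) ℂ),
      (L * Xᴴ * Lᴴ) * ginv (L * Y * Lᴴ) * (L * X * Lᴴ) =
        (S⁻¹ * X * Lᴴ)ᴴ * ((S * Lᴴ) * ginv (L * Y * Lᴴ) * (S * Lᴴ)ᴴ) * (S⁻¹ * X * Lᴴ) := by
    intro m L
    rw [hMH, hPH, ← hMPH L, ← hPM L]
    simp only [Matrix.mul_assoc]
  constructor
  · intro m L
    set M : Matrix (Fin n) (Fin m) ℂ := S⁻¹ * X * Lᴴ with hMdef
    set G := ginv (L * Y * Lᴴ) with hGdef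
    have hGH : Gᴴ = G := ginv_conjTranspose (hBH L)
    have hGBG : G * (L * Y * Lᴴ) * G = G := ginv_mul_self_mul_ginv (hBH L)
    set Pi := (S * Lᴴ) * G * (S * Lᴴ)ᴴ with hPidef
    have hPiH : Piᴴ = Pi := by
      rw [hPidef]
      simp only [Matrix.conjTranspose_mul, Matrix.conjTranspose_conjTranspose, hGH]
      simp only [Matrix.mul_assoc]
    have hPi2 : Pi * Pi = Pi := by
      calc Pi * Pi = (S * Lᴴ) * (G * ((S * Lᴴ)ᴴ * (S * Lᴴ)) * G) * (S * Lᴴ)ᴴ := by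
            rw [hPidef]; simp only [Matrix.mul_assoc]
        _ = (S * Lᴴ) * (G * (L * Y * Lᴴ) * G) * (S * Lᴴ)ᴴ := by rw [hPH, hPP]
        _ = Pi := by rw [hGBG, hPidef]
    have hQ : (1 - Pi) * (1 - Pi) = 1 - Pi := by
      simp [Matrix.sub_mul, Matrix.mul_sub, hPi2]
    have h1H : (1 - Pi)ᴴ = 1 - Pi := by
      rw [Matrix.conjTranspose_sub, Matrix.conjTranspose_one, hPiH]
    have key : ((1 - Pi) * M)ᴴ * ((1 - Pi) * M) =
        L * Xᴴ * Y⁻¹ * X * Lᴴ - (L * Xᴴ * Lᴴ) * G * (L * X * Lᴴ) := by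
      calc ((1 - Pi) * M)ᴴ * ((1 - Pi) * M)
          = Mᴴ * ((1 - Pi) * (1 - Pi)) * M := by
            rw [Matrix.conjTranspose_mul, h1H]
            simp only [Matrix.mul_assoc]
        _ = Mᴴ * M - Mᴴ * Pi * M := by
            rw [hQ, Matrix.mul_sub, Matrix.sub_mul, Matrix.mul_one]
        _ = L * Xᴴ * Y⁻¹ * X * Lᴴ - (L * Xᴴ * Lᴴ) * G * (L * X * Lᴴ) := by
            rw [hMid L, ← hGdef, ← hPidef, hMdef, hMH]
            rw [hMM]
    rw [← key]
    exact Matrix.posSemidef_conjTranspose_mul_self _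
  · intro L hL
    have hLdu : IsUnit L.det := (Matrix.isUnit_iff_isUnit_det L).mp hL
    have hLHdu : IsUnit Lᴴ.det := by
      rw [Matrix.det_conjTranspose]; exact hLdu.star
    have hBdu : IsUnit (L * Y * Lᴴ).det := by
      rw [Matrix.det_mul, Matrix.det_mul]
      exact (hLdu.mul hYdu).mul hLHdu
    have hGB : ginv (L * Y * Lᴴ) * (L * Y * Lᴴ) = 1 := ginv_mul_of_isUnit (hBH L) hBdu
    have hPdu : IsUnit (S * Lᴴ).det := by
      rw [Matrix.det_mul]; exact hSdu.mul hLHdu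
    have hGPHP : (ginv (L * Y * Lᴴ) * (S * Lᴴ)ᴴ) * (S * Lᴴ) = 1 := by
      rw [Matrix.mul_assoc, hPH, hPP, hGB]
    have hPinv : (S * Lᴴ)⁻¹ = ginv (L * Y * Lᴴ) * (S * Lᴴ)ᴴ :=
      Matrix.inv_eq_left_inv hGPHP
    have hPiOne : (S * Lᴴ) * ginv (L * Y * Lᴴ) * (S * Lᴴ)ᴴ = 1 := by
      rw [Matrix.mul_assoc, ← hPinv, Matrix.mul_nonsing_inv _ hPdu]
    rw [hMid L, hPiOne, Matrix.mul_one, hMH, hMM]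
end

section
/- For positive definite matrices ρ and σ of the same dimension and any α ∈ (0,1) ∪ (1,∞), the following three expressions are equal: Tr[σ (σ^{−1/2} ρ σ^{−1/2})^α] = Tr[ρ (ρ^{−1/2} σ ρ^{−1/2})^{1−α}] = Tr[ρ (ρ^{1/2} σ^{−1} ρ^{1/2})^{α−1}]. -/
open Matrix
open scoped ComplexOrder

/-- Real matrix power of a Hermitian matrix via the functional calculus. -/
noncomputable def mrpow {d : Type*} [Fintype d] [DecidableEq d]
    (A : Matrix d d ℂ) (r : ℝ) : Matrix d d ℂ :=
  matFun A (fun x => x ^ r)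

section Aux

variable {d : Type*} [Fintype d] [DecidableEq d]

lemma contOn (f : ℝ → ℝ) (A : Matrix d d ℂ) : ContinuousOn f (spectrum ℝ A) :=
  (Matrix.finite_real_spectrum (A:=A)).continuousOn f

lemma isHermitian_isSelfAdjoint {A : Matrix d d ℂ} (hA : A.IsHermitian) : IsSelfAdjoint A := hA

lemma mrpow_eq_cfc {A : Matrix d d ℂ} (hA : A.IsHermitian) (r : ℝ) :
    mrpow A r = cfc (fun x : ℝ => x ^ r) A := by
  rw [mrpow, matFun, dif_pos hA, Matrix.IsHermitian.cfc_eq hA, Matrix.IsHermitian.cfc]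
  rfl

lemma mrpow_isHermitian {A : Matrix d d ℂ} (hA : A.IsHermitian) (r : ℝ) :
    (mrpow A r).IsHermitian := by
  rw [mrpow_eq_cfc hA]
  exact cfc_predicate _ A

lemma spectrum_pos {A : Matrix d d ℂ} (hA : A.PosDef) : ∀ x ∈ spectrum ℝ A, 0 < x := by
  rw [Matrix.IsHermitian.spectrum_real_eq_range_eigenvalues hA.1]
  rintro x ⟨i, rfl⟩
  exact hA.eigenvalues_pos i

lemma mrpow_add {A : Matrix d d ℂ} (hA : A.PosDef) (r s : ℝ) :
    mrpow A r * mrpow A s = mrpow A (r + s) := by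
  rw [mrpow_eq_cfc hA.1 r, mrpow_eq_cfc hA.1 s, mrpow_eq_cfc hA.1 (r + s),
    ← cfc_mul _ _ A (contOn _ A) (contOn _ A)]
  exact cfc_congr fun x hx => (Real.rpow_add (spectrum_pos hA x hx) r s).symm

lemma mrpow_zero {A : Matrix d d ℂ} (hA : A.IsHermitian) : mrpow A 0 = 1 := by
  rw [mrpow_eq_cfc hA]
  have : (fun x : ℝ => x ^ (0:ℝ)) = fun _ => (1:ℝ) := funext fun x => Real.rpow_zero x
  rw [this]
  exact cfc_const_one ℝ A (isHermitian_isSelfAdjoint hA)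

lemma mrpow_one {A : Matrix d d ℂ} (hA : A.IsHermitian) : mrpow A 1 = A := by
  rw [mrpow_eq_cfc hA]
  have : (fun x : ℝ => x ^ (1:ℝ)) = fun x : ℝ => x := funext fun x => Real.rpow_one x
  rw [this]
  exact cfc_id' ℝ A (isHermitian_isSelfAdjoint hA)

lemma mrpow_inv {A : Matrix d d ℂ} (hA : A.PosDef) (r : ℝ) :
    (mrpow A r)⁻¹ = mrpow A (-r) :=
  Matrix.inv_eq_right_inv (by rw [mrpow_add hA, add_neg_cancel, mrpow_zero hA.1])

lemma inv_eq_mrpow {A : Matrix d d ℂ} (hA : A.PosDef) : A⁻¹ = mrpow A (-1) := by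
  have := mrpow_inv hA 1
  rwa [mrpow_one hA.1] at this

lemma mrpow_mrpow {A : Matrix d d ℂ} (hA : A.PosDef) (r s : ℝ) :
    mrpow (mrpow A r) s = mrpow A (r * s) := by
  rw [mrpow_eq_cfc (mrpow_isHermitian hA.1 r) s, mrpow_eq_cfc hA.1 r,
    mrpow_eq_cfc hA.1 (r * s),
    ← cfc_comp (fun x : ℝ => x ^ s) (fun x : ℝ => x ^ r) A (isHermitian_isSelfAdjoint hA.1)
      (((Matrix.finite_real_spectrum (A:=A)).image _).continuousOn _) (contOn _ A)]
  refine cfc_congr fun x hx => ?_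
  simp only [Function.comp_apply]
  rw [← Real.rpow_mul (le_of_lt (spectrum_pos hA x hx))]

lemma posDef_conj {A : Matrix d d ℂ} (hA : A.PosDef) {X : Matrix d d ℂ} (hX : IsUnit X) :
    (X * A * star X).PosDef := by
  have hdet : IsUnit (star X).det := by
    rw [Matrix.star_eq_conjTranspose, Matrix.det_conjTranspose]
    exact ((Matrix.isUnit_iff_isUnit_det X).mp hX).star
  refine Matrix.PosDef.of_dotProduct_mulVec_pos ?_ fun x hx => ?_
  · rw [Matrix.star_eq_conjTranspose]
    exact Matrix.isHermitian_mul_mul_conjTranspose X hA.1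
  · have hne : (star X) *ᵥ x ≠ 0 := by
      intro h
      apply hx
      have := congrArg (fun v => (star X)⁻¹ *ᵥ v) h
      simpa [Matrix.mulVec_mulVec, Matrix.nonsing_inv_mul _ hdet] using this
    have h := hA.dotProduct_mulVec_pos hne
    have e1 : (X * A * star X) *ᵥ x = X *ᵥ (A *ᵥ ((star X) *ᵥ x)) := by
      simp [Matrix.mulVec_mulVec, mul_assoc]
    rw [Matrix.star_mulVec, Matrix.star_eq_conjTranspose, Matrix.conjTranspose_conjTranspose] at h
    rw [e1, Matrix.dotProduct_mulVec]
    exact h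

lemma mrpow_posDef {A : Matrix d d ℂ} (hA : A.PosDef) (r : ℝ) : (mrpow A r).PosDef := by
  rw [mrpow, matFun, dif_pos hA.1]
  have hU : IsUnit (hA.1.eigenvectorUnitary : Matrix d d ℂ) :=
    ⟨⟨_, star (hA.1.eigenvectorUnitary : Matrix d d ℂ),
      Unitary.mul_star_self_of_mem hA.1.eigenvectorUnitary.2,
      Unitary.star_mul_self_of_mem hA.1.eigenvectorUnitary.2⟩, rfl⟩
  have hD : (Matrix.diagonal (fun i => ((hA.1.eigenvalues i ^ r : ℝ) : ℂ))).PosDef := by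
    rw [Matrix.posDef_diagonal_iff]
    intro i
    exact (RCLike.ofReal_pos (K := ℂ)).mpr (Real.rpow_pos_of_pos (hA.eigenvalues_pos i) r)
  exact posDef_conj hD hU

/-- Conjugation by a unitary as a star algebra homomorphism. -/
noncomputable def conjSAH (W : Matrix d d ℂ) (h1 : star W * W = 1) (h2 : W * star W = 1) :
    Matrix d d ℂ →⋆ₐ[ℂ] Matrix d d ℂ where
  toFun M := W * M * star W
  map_one' := by simp only [mul_one, h2]
  map_mul' M N := by
    rw [show (W*M*star W)*(W*N*star W) = W*M*(star W*W)*(N*star W) by noncomm_ring, h1, mul_one]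
    noncomm_ring
  map_zero' := by simp
  map_add' M N := by noncomm_ring
  commutes' c := by
    simp only [Algebra.algebraMap_eq_smul_one]
    rw [mul_smul_comm, mul_one, smul_mul_assoc, h2]
  map_star' M := by
    simp only [Matrix.star_mul, star_star, mul_assoc]

lemma cfc_conj {W : Matrix d d ℂ} (h1 : star W * W = 1) (h2 : W * star W = 1)
    {B : Matrix d d ℂ} (hB : B.IsHermitian) (f : ℝ → ℝ) :
    cfc f (W * B * star W) = W * cfc f B * star W := by
  have hcont : Continuous fun M : Matrix d d ℂ => W * M * star W :=
    (continuous_const.matrix_mul continuous_id).matrix_mul continuous_const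
  have hsa : IsSelfAdjoint (W * B * star W) := by
    rw [Matrix.star_eq_conjTranspose]
    exact Matrix.isHermitian_mul_mul_conjTranspose W hB
  exact (StarAlgHom.map_cfc (conjSAH W h1 h2) f B (contOn f B) hcont
    (isHermitian_isSelfAdjoint hB) hsa).symm

lemma mrpow_conj {W : Matrix d d ℂ} (h1 : star W * W = 1) (h2 : W * star W = 1)
    {B : Matrix d d ℂ} (hB : B.IsHermitian) (r : ℝ) :
    mrpow (W * B * star W) r = W * mrpow B r * star W := by
  have hsa : (W * B * star W).IsHermitian := by
    rw [Matrix.star_eq_conjTranspose]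
    exact Matrix.isHermitian_mul_mul_conjTranspose W hB
  rw [mrpow_eq_cfc hsa, mrpow_eq_cfc hB, cfc_conj h1 h2 hB]

lemma star_mrpow {A : Matrix d d ℂ} (hA : A.IsHermitian) (r : ℝ) :
    star (mrpow A r) = mrpow A r := (mrpow_isHermitian hA r)

/-- Key commutation: `(X X*)^r X = X (X* X)^r` for invertible `X`. -/
lemma mrpow_mul_star_comm {X : Matrix d d ℂ} (hX : IsUnit X) (r : ℝ) :
    mrpow (X * star X) r * X = X * mrpow (star X * X) r := by
  have hB : (star X * X).PosDef := by
    have := posDef_conj (Matrix.PosDef.one (n := d) (R := ℂ)) hX.star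
    simpa [mul_one] using this
  set B := star X * X with hBdef
  have hPP : mrpow B (1/2 : ℝ) * mrpow B (1/2 : ℝ) = B := by
    rw [mrpow_add hB]; norm_num [mrpow_one hB.1]
  set W := X * mrpow B (-(1/2) : ℝ) with hWdef
  have hstarW : star W = mrpow B (-(1/2) : ℝ) * star X := by
    rw [hWdef, Matrix.star_mul, star_mrpow hB.1]
  have h1 : star W * W = 1 := by
    rw [hstarW, hWdef]
    calc mrpow B (-(1/2):ℝ) * star X * (X * mrpow B (-(1/2):ℝ))
        = mrpow B (-(1/2):ℝ) * B * mrpow B (-(1/2):ℝ) := by rw [hBdef]; noncomm_ring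
    _ = 1 := by
        nth_rewrite 2 [← mrpow_one hB.1]
        rw [mrpow_add hB, mrpow_add hB]
        norm_num [mrpow_zero hB.1]
  have h2 : W * star W = 1 := mul_eq_one_comm.mp h1
  have hXWP : X = W * mrpow B (1/2 : ℝ) := by
    rw [hWdef, mul_assoc, mrpow_add hB]
    norm_num [mrpow_zero hB.1]
  have hXX : X * star X = W * B * star W := by
    conv_lhs => rw [hXWP]
    rw [Matrix.star_mul, star_mrpow hB.1]
    calc W * mrpow B (1/2:ℝ) * (mrpow B (1/2:ℝ) * star W)
        = W * (mrpow B (1/2:ℝ) * mrpow B (1/2:ℝ)) * star W := by noncomm_ring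
    _ = W * B * star W := by rw [hPP]
  rw [hXX, mrpow_conj h1 h2 hB.1 r]
  have hcomm : mrpow B r * mrpow B (1/2:ℝ) = mrpow B (1/2:ℝ) * mrpow B r := by
    rw [mrpow_add hB, mrpow_add hB, add_comm]
  conv_lhs => rw [hXWP]
  conv_rhs => rw [hXWP]
  calc W * mrpow B r * star W * (W * mrpow B (1/2:ℝ))
      = W * mrpow B r * (star W * W) * mrpow B (1/2:ℝ) := by noncomm_ring
  _ = W * (mrpow B r * mrpow B (1/2:ℝ)) := by rw [h1]; noncomm_ring
  _ = W * (mrpow B (1/2:ℝ) * mrpow B r) := by rw [hcomm]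
  _ = W * mrpow B (1/2:ℝ) * mrpow B r := by noncomm_ring

end Aux

/-- **Alternative expressions for the geometric Rényi relative quasi-entropy.** For positive
definite `ρ, σ` and `α ∈ (0,1) ∪ (1,∞)`:
`Tr[σ (σ^{-1/2} ρ σ^{-1/2})^α] = Tr[ρ (ρ^{-1/2} σ ρ^{-1/2})^{1-α}] = Tr[ρ (ρ^{1/2} σ⁻¹ ρ^{1/2})^{α-1}]`. -/
theorem geomRenyiQuasiEntropy_alt_expressions {n : ℕ}
    (ρ σ : Matrix (Fin n) (Fin n) ℂ) (hρ : ρ.PosDef) (hσ : σ.PosDef)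
    (α : ℝ) (hα : α ∈ Set.Ioo (0 : ℝ) 1 ∪ Set.Ioi 1) :
    (σ * mrpow (mrpow σ (-(1 / 2)) * ρ * mrpow σ (-(1 / 2))) α).trace =
      (ρ * mrpow (mrpow ρ (-(1 / 2)) * σ * mrpow ρ (-(1 / 2))) (1 - α)).trace ∧
    (σ * mrpow (mrpow σ (-(1 / 2)) * ρ * mrpow σ (-(1 / 2))) α).trace =
      (ρ * mrpow (mrpow ρ (1 / 2) * σ⁻¹ * mrpow ρ (1 / 2)) (α - 1)).trace := by
  have hσinv : σ⁻¹ * σ = 1 := by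
    refine mul_eq_one_comm.mp ?_
    rw [inv_eq_mrpow hσ]
    nth_rewrite 1 [← mrpow_one hσ.1]
    rw [mrpow_add hσ]
    norm_num [mrpow_zero hσ.1]
  set s2 := mrpow σ (-(1 / 2) : ℝ) with hs2def
  set r2 := mrpow ρ ((1 / 2) : ℝ) with hr2def
  set rm2 := mrpow ρ (-(1 / 2) : ℝ) with hrm2def
  have hr2r2 : r2 * r2 = ρ := by
    rw [hr2def, mrpow_add hρ]; norm_num [mrpow_one hρ.1]
  have hs2s2 : s2 * s2 = σ⁻¹ := by
    rw [hs2def, mrpow_add hσ, inv_eq_mrpow hσ]; norm_num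
  have hr2rm2 : r2 * rm2 = 1 := by
    rw [hr2def, hrm2def, mrpow_add hρ]; norm_num [mrpow_zero hρ.1]
  have hs2σs2 : s2 * σ * s2 = 1 := by
    rw [← mrpow_one hσ.1, hs2def, mrpow_add hσ, mrpow_add hσ]
    norm_num [mrpow_zero hσ.1]
  set X := s2 * r2 with hXdef
  have hXunit : IsUnit X := by
    rw [hXdef, hs2def, hr2def]
    exact ((mrpow_posDef hσ _).isUnit).mul ((mrpow_posDef hρ _).isUnit)
  have hstarX : star X = r2 * s2 := by
    rw [hXdef, hs2def, hr2def, Matrix.star_mul, star_mrpow hρ.1, star_mrpow hσ.1]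
  have hXXs : X * star X = s2 * ρ * s2 := by
    rw [hstarX, hXdef]
    calc s2 * r2 * (r2 * s2) = s2 * (r2 * r2) * s2 := by noncomm_ring
    _ = s2 * ρ * s2 := by rw [hr2r2]
  have hsXX : star X * X = r2 * σ⁻¹ * r2 := by
    rw [hstarX, hXdef]
    calc r2 * s2 * (s2 * r2) = r2 * (s2 * s2) * r2 := by noncomm_ring
    _ = r2 * σ⁻¹ * r2 := by rw [hs2s2]
  have hApos : (X * star X).PosDef := by
    have := posDef_conj (Matrix.PosDef.one (n := Fin n) (R := ℂ)) hXunit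
    simpa [mul_one] using this
  have hBpos : (star X * X).PosDef := by
    have := posDef_conj (Matrix.PosDef.one (n := Fin n) (R := ℂ)) hXunit.star
    simpa [mul_one, star_star] using this
  have hrXsX : star X * σ * X = ρ := by
    rw [hstarX, hXdef]
    calc r2 * s2 * σ * (s2 * r2) = r2 * (s2 * σ * s2) * r2 := by noncomm_ring
    _ = ρ := by rw [hs2σs2, mul_one, hr2r2]
  have key2 : (σ * mrpow (s2 * ρ * s2) α).trace = (ρ * mrpow (r2 * σ⁻¹ * r2) (α - 1)).trace := by
    rw [← hXXs, ← hsXX]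
    have hsplit : mrpow (X * star X) (α - 1) * (X * star X) = mrpow (X * star X) α := by
      nth_rewrite 2 [← mrpow_one hApos.1]
      rw [mrpow_add hApos]
      have : α - 1 + 1 = α := by ring
      rw [this]
    rw [← hsplit]
    have e : σ * (mrpow (X * star X) (α - 1) * (X * star X))
        = (σ * (mrpow (X * star X) (α - 1) * X)) * star X := by noncomm_ring
    rw [e]
    conv_lhs => rw [Matrix.trace_mul_comm]
    rw [mrpow_mul_star_comm hXunit (α - 1)]
    have e2 : star X * (σ * (X * mrpow (star X * X) (α - 1)))
        = (star X * σ * X) * mrpow (star X * X) (α - 1) := by noncomm_ring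
    rw [e2, hrXsX]
  have hBpos' : (r2 * σ⁻¹ * r2).PosDef := by rw [← hsXX]; exact hBpos
  have hBinv : rm2 * σ * rm2 = (r2 * σ⁻¹ * r2)⁻¹ := by
    symm
    apply Matrix.inv_eq_right_inv
    calc r2 * σ⁻¹ * r2 * (rm2 * σ * rm2)
        = r2 * σ⁻¹ * (r2 * rm2) * σ * rm2 := by noncomm_ring
    _ = r2 * σ⁻¹ * σ * rm2 := by rw [hr2rm2, mul_one]
    _ = r2 * rm2 := by rw [mul_assoc r2 σ⁻¹ σ, hσinv, mul_one]
    _ = 1 := hr2rm2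
  have key1 : (ρ * mrpow (rm2 * σ * rm2) (1 - α)).trace
      = (ρ * mrpow (r2 * σ⁻¹ * r2) (α - 1)).trace := by
    rw [hBinv, inv_eq_mrpow hBpos', mrpow_mrpow hBpos']
    have : (-1 : ℝ) * (1 - α) = α - 1 := by ring
    rw [this]
  exact ⟨key2.trans key1.symm, key2⟩
end

section
/- Schwarz inequality for two-positive unital maps: if Φ is a two-positive, unital linear map on complex matrices, then Φ(X†)Φ(X) ≤ Φ(X†X) and Φ(X)Φ(X†) ≤ Φ(XX†) for every matrix X, where ≤ is the Loewner order. -/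
open Matrix
open scoped ComplexOrder

private lemma schwarz_key {n m : ℕ}
    (Φ : Matrix (Fin n) (Fin n) ℂ →ₗ[ℂ] Matrix (Fin m) (Fin m) ℂ)
    (hunital : Φ 1 = 1)
    (h2pos : ∀ A B C D : Matrix (Fin n) (Fin n) ℂ,
      (Matrix.fromBlocks A B C D).PosSemidef →
        (Matrix.fromBlocks (Φ A) (Φ B) (Φ C) (Φ D)).PosSemidef)
    (X : Matrix (Fin n) (Fin n) ℂ) :
    (Φ (Xᴴ * X) - Φ Xᴴ * Φ X).PosSemidef := by
  have hM : (fromBlocks (Xᴴ * X) Xᴴ X (1 : Matrix (Fin n) (Fin n) ℂ)).PosSemidef := by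
    have : fromBlocks (Xᴴ * X) Xᴴ X (1 : Matrix (Fin n) (Fin n) ℂ) =
        (fromBlocks X 1 0 0)ᴴ * (fromBlocks X 1 0 0) := by
      simp [fromBlocks_conjTranspose, fromBlocks_multiply]
    rw [this]
    exact posSemidef_conjTranspose_mul_self _
  have hP := h2pos _ _ _ _ hM
  rw [hunital] at hP
  have hherm : (Φ Xᴴ)ᴴ = Φ X := by
    have := hP.1
    rw [IsHermitian, fromBlocks_conjTranspose] at this
    have := congrArg Matrix.toBlocks₂₁ this
    simpa [Matrix.toBlocks_fromBlocks₂₁] using this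
  rw [← hherm] at hP
  have : Invertible (1 : Matrix (Fin m) (Fin m) ℂ) := invertibleOne
  have := (Matrix.PosDef.fromBlocks₂₂ (Φ (Xᴴ * X)) (Φ Xᴴ)
    (Matrix.PosDef.one (n := Fin m) (R := ℂ))).mp hP
  simpa [hherm] using this

/-- **Schwarz inequality for two-positive unital maps.** If `Φ` is a linear, unital,
two-positive map on complex matrices, then `Φ(Xᴴ)Φ(X) ≤ Φ(XᴴX)` and
`Φ(X)Φ(Xᴴ) ≤ Φ(XXᴴ)` in the Loewner order, for every matrix `X`. -/
theorem schwarz_two_positive_unital {n m : ℕ}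
    (Φ : Matrix (Fin n) (Fin n) ℂ →ₗ[ℂ] Matrix (Fin m) (Fin m) ℂ)
    (hunital : Φ 1 = 1)
    (h2pos : ∀ A B C D : Matrix (Fin n) (Fin n) ℂ,
      (Matrix.fromBlocks A B C D).PosSemidef →
        (Matrix.fromBlocks (Φ A) (Φ B) (Φ C) (Φ D)).PosSemidef) :
    ∀ X : Matrix (Fin n) (Fin n) ℂ,
      (Φ (Xᴴ * X) - Φ Xᴴ * Φ X).PosSemidef ∧
      (Φ (X * Xᴴ) - Φ X * Φ Xᴴ).PosSemidef := by
  intro X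
  refine ⟨schwarz_key Φ hunital h2pos X, ?_⟩
  simpa using schwarz_key Φ hunital h2pos Xᴴ
end

section
/- Sup-trace characterization of the operator norm: for a positive semidefinite matrix K, sup over matrices Z with Tr[Z†Z] = 1 of Tr[Z†Z K] equals ‖K‖∞. More generally, for positive semidefinite K_RB on a bipartite space and Choi-type quantities X = ∂Γ, Y = Γ with Γ positive definite, sup over invertible Z_R with Tr[Z_R†Z_R] = 1 of Tr[(Z_R X Z_R†)(Z_R Y Z_R†)⁻¹(Z_R X Z_R†)] = ‖Tr_B[X Y⁻¹ X]‖∞, where X is Hermitian and the transformer equality (Z X Z†)(Z Y Z†)⁻¹(Z X Z†) = Z X Y⁻¹ X Z† for invertible Z is used. -/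
open Matrix
open scoped ComplexOrder Kronecker

/-- The operator (spectral) norm of a complex matrix, via its action on Euclidean space. -/
noncomputable def opNorm {d : Type*} [Fintype d] [DecidableEq d]
    (A : Matrix d d ℂ) : ℝ :=
  ‖Matrix.toEuclideanCLM (𝕜 := ℂ) A‖

/-- Partial trace over the second tensor factor. -/
noncomputable def ptraceB {a b : ℕ}
    (M : Matrix (Fin a × Fin b) (Fin a × Fin b) ℂ) : Matrix (Fin a) (Fin a) ℂ :=
  Matrix.of fun i j => ∑ k : Fin b, M (i, k) (j, k)

namespace RLDAux


variable {n : ℕ}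

lemma quad_le (A : Matrix (Fin n) (Fin n) ℂ) (v : Fin n → ℂ) :
    (star v ⬝ᵥ A *ᵥ v).re ≤ opNorm A * ∑ i, ‖v i‖ ^ 2 := by
  set T := Matrix.toEuclideanCLM (𝕜 := ℂ) A with hT
  set w : EuclideanSpace ℂ (Fin n) := (WithLp.equiv 2 _).symm v with hw
  have hTv : WithLp.equiv 2 _ (T w) = A *ᵥ v := by
    rw [hT, hw, WithLp.equiv_symm_apply, Matrix.toEuclideanCLM_toLp]
    simp [Matrix.toLin'_apply]
  have hinner : (inner ℂ w (T w) : ℂ) = star v ⬝ᵥ A *ᵥ v := by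
    rw [EuclideanSpace.inner_eq_star_dotProduct, ← WithLp.equiv_apply, hTv]
    exact dotProduct_comm _ _
  have hnw : ‖w‖ ^ 2 = ∑ i, ‖v i‖ ^ 2 := by
    rw [EuclideanSpace.norm_eq, Real.sq_sqrt (by positivity)]; rfl
  calc (star v ⬝ᵥ A *ᵥ v).re = (inner ℂ w (T w) : ℂ).re := by rw [hinner]
    _ ≤ ‖(inner ℂ w (T w) : ℂ)‖ := Complex.re_le_norm _
    _ ≤ ‖w‖ * ‖T w‖ := norm_inner_le_norm _ _
    _ ≤ ‖w‖ * (‖T‖ * ‖w‖) := by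
        exact mul_le_mul_of_nonneg_left (T.le_opNorm w) (norm_nonneg w)
    _ = opNorm A * ‖w‖ ^ 2 := by rw [opNorm]; ring
    _ = opNorm A * ∑ i, ‖v i‖ ^ 2 := by rw [hnw]

lemma diag_Z (Z K : Matrix (Fin n) (Fin n) ℂ) (i : Fin n) :
    (Z * K * Zᴴ) i i = star (star (Z i)) ⬝ᵥ K *ᵥ star (Z i) := by
  simp only [Matrix.mul_apply, Matrix.conjTranspose_apply, dotProduct, Matrix.mulVec,
    Finset.sum_mul, Finset.mul_sum, Pi.star_apply, star_star]
  rw [Finset.sum_comm]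
  refine Finset.sum_congr rfl fun j _ => Finset.sum_congr rfl fun l _ => by ring

lemma trace_eq_sum (Z K : Matrix (Fin n) (Fin n) ℂ) :
    (Zᴴ * Z * K).trace = ∑ i, star (star (Z i)) ⬝ᵥ K *ᵥ star (Z i) := by
  rw [← Matrix.trace_mul_cycle Z K Zᴴ]
  exact Finset.sum_congr rfl fun i _ => diag_Z Z K i

lemma norm_sq_of_star_mul_self (z : ℂ) : ((starRingEnd ℂ) z * z).re = ‖z‖ ^ 2 := by
  rw [mul_comm, Complex.mul_conj]
  simp [Complex.normSq_eq_norm_sq]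
  norm_cast

lemma trace_ZhZ_re (Z : Matrix (Fin n) (Fin n) ℂ) :
    ((Zᴴ * Z).trace).re = ∑ i, ∑ l, ‖(star (Z i)) l‖ ^ 2 := by
  rw [Matrix.trace]
  rw [Complex.re_sum]
  simp only [Matrix.diag_apply, Matrix.mul_apply, Matrix.conjTranspose_apply, Complex.re_sum]
  rw [Finset.sum_comm]
  refine Finset.sum_congr rfl fun i _ => Finset.sum_congr rfl fun l _ => by
    simpa [norm_star] using norm_sq_of_star_mul_self (Z i l)

lemma upper_bound (K Z : Matrix (Fin n) (Fin n) ℂ) (hZ : (Zᴴ * Z).trace = 1) :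
    ((Zᴴ * Z * K).trace).re ≤ opNorm K := by
  rw [trace_eq_sum, Complex.re_sum]
  calc ∑ i, (star (star (Z i)) ⬝ᵥ K *ᵥ star (Z i)).re
      ≤ ∑ i, opNorm K * ∑ l, ‖(star (Z i)) l‖ ^ 2 :=
        Finset.sum_le_sum fun i _ => quad_le K (star (Z i))
    _ = opNorm K * ∑ i, ∑ l, ‖(star (Z i)) l‖ ^ 2 := by rw [Finset.mul_sum]
    _ = opNorm K * ((Zᴴ * Z).trace).re := by rw [trace_ZhZ_re]
    _ = opNorm K := by rw [hZ]; simp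

lemma clm_eigen (K : Matrix (Fin n) (Fin n) ℂ) (hH : K.IsHermitian) (i : Fin n) :
    Matrix.toEuclideanCLM (𝕜 := ℂ) K (hH.eigenvectorBasis i)
      = ((hH.eigenvalues i : ℝ) : ℂ) • hH.eigenvectorBasis i := by
  apply (WithLp.equiv 2 _).injective
  rw [WithLp.equiv_apply, Matrix.ofLp_toEuclideanCLM]
  rw [WithLp.equiv_apply, WithLp.ofLp_smul]
  have h := hH.mulVec_eigenvectorBasis i
  simp only [Matrix.toLin'_apply]
  rw [h]
  ext j
  simp [Complex.real_smul]

lemma clm_selfAdjoint (K : Matrix (Fin n) (Fin n) ℂ) (hH : K.IsHermitian) :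
    _root_.IsSelfAdjoint (Matrix.toEuclideanCLM (𝕜 := ℂ) K) := by
  have : star (Matrix.toEuclideanCLM (𝕜 := ℂ) K) = Matrix.toEuclideanCLM (𝕜 := ℂ) K := by
    rw [← map_star, Matrix.star_eq_conjTranspose, hH.eq]
  exact this

lemma opNorm_eq_max (K : Matrix (Fin n) (Fin n) ℂ) (hK : K.PosSemidef)
    {i₀ : Fin n} (hmax : ∀ i, hK.1.eigenvalues i ≤ hK.1.eigenvalues i₀) :
    opNorm K = hK.1.eigenvalues i₀ := by
  set T := Matrix.toEuclideanCLM (𝕜 := ℂ) K with hT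
  set b := hK.1.eigenvectorBasis with hb
  set ev := hK.1.eigenvalues with hev
  have hev0 : ∀ i, 0 ≤ ev i := hK.eigenvalues_nonneg
  have hTb : ∀ i, T (b i) = ((ev i : ℝ) : ℂ) • b i := clm_eigen K hK.1
  refine le_antisymm ?_ ?_
  · refine ContinuousLinearMap.opNorm_le_bound _ (hev0 i₀) fun v => ?_
    have hrepr : ∀ i, b.repr (T v) i = ((ev i : ℝ) : ℂ) * b.repr v i := by
      intro i
      rw [b.repr_apply_apply, b.repr_apply_apply]
      have hsym := (clm_selfAdjoint K hK.1).isSymmetric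
      calc (inner ℂ (b i) (T v) : ℂ) = inner ℂ (T (b i)) v := (hsym _ _).symm
        _ = inner ℂ (((ev i : ℝ) : ℂ) • b i) v := by rw [hTb]
        _ = ((ev i : ℝ) : ℂ) * inner ℂ (b i) v := by
            rw [inner_smul_left]; simp
    have h1 : ‖T v‖ ^ 2 ≤ (ev i₀) ^ 2 * ‖v‖ ^ 2 := by
      rw [← b.repr.norm_map (T v), ← b.repr.norm_map v]
      rw [EuclideanSpace.norm_eq, Real.sq_sqrt (by positivity),
        EuclideanSpace.norm_eq, Real.sq_sqrt (by positivity), Finset.mul_sum]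
      refine Finset.sum_le_sum fun i _ => ?_
      rw [hrepr i]
      rw [norm_mul, mul_pow]
      refine mul_le_mul_of_nonneg_right ?_ (by positivity)
      rw [Complex.norm_real, Real.norm_eq_abs, abs_of_nonneg (hev0 i)]
      exact pow_le_pow_left₀ (hev0 i) (hmax i) 2
    calc ‖T v‖ = Real.sqrt (‖T v‖ ^ 2) := (Real.sqrt_sq (norm_nonneg _)).symm
      _ ≤ Real.sqrt ((ev i₀) ^ 2 * ‖v‖ ^ 2) := Real.sqrt_le_sqrt h1
      _ = ev i₀ * ‖v‖ := by
          rw [Real.sqrt_mul (by positivity), Real.sqrt_sq (hev0 i₀),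
            Real.sqrt_sq (norm_nonneg _)]
  · have hbn : ‖b i₀‖ = 1 := b.orthonormal.1 i₀
    have h := T.le_opNorm (b i₀)
    rw [hTb i₀, norm_smul, hbn, mul_one, Complex.norm_real, Real.norm_eq_abs,
      abs_of_nonneg (hev0 i₀), mul_one] at h
    exact h

lemma isGreatest_part1 (hn : 0 < n) (K : Matrix (Fin n) (Fin n) ℂ) (hK : K.PosSemidef) :
    IsGreatest {r : ℝ | ∃ Z : Matrix (Fin n) (Fin n) ℂ,
        (Zᴴ * Z).trace = 1 ∧ r = ((Zᴴ * Z * K).trace).re}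
      (opNorm K) := by
  haveI : Nonempty (Fin n) := ⟨⟨0, hn⟩⟩
  obtain ⟨i₀, hmax⟩ := Finite.exists_max hK.1.eigenvalues
  have hnorm_eq := opNorm_eq_max K hK hmax
  obtain ⟨u, hu_eq⟩ : ∃ u : Fin n → ℂ, u = ⇑(hK.1.eigenvectorBasis i₀) := ⟨_, rfl⟩
  have hustar : star u ⬝ᵥ u = 1 := by
    have h1 : (inner ℂ (hK.1.eigenvectorBasis i₀) (hK.1.eigenvectorBasis i₀) : ℂ)
        = star u ⬝ᵥ u := by
      rw [EuclideanSpace.inner_eq_star_dotProduct, hu_eq]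
      exact dotProduct_comm _ _
    rw [← h1, inner_self_eq_norm_sq_to_K, hK.1.eigenvectorBasis.orthonormal.1 i₀]
    norm_num
  have hKu : K *ᵥ u = (hK.1.eigenvalues i₀ : ℝ) • u := by
    rw [hu_eq]; exact hK.1.mulVec_eigenvectorBasis i₀
  set Z : Matrix (Fin n) (Fin n) ℂ := Matrix.of fun i j => if i = i₀ then star (u j) else 0
    with hZdef
  have hZZ : Zᴴ * Z = Matrix.of fun j l => u j * star (u l) := by
    ext j l
    simp [hZdef, Matrix.mul_apply, apply_ite, Finset.sum_ite_eq']
  have htr1 : (Zᴴ * Z).trace = 1 := by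
    rw [hZZ]
    rw [Matrix.trace]
    calc ∑ j, (Matrix.of fun j l => u j * star (u l)).diag j = star u ⬝ᵥ u := by
          simp only [Matrix.diag_apply, Matrix.of_apply, dotProduct, Pi.star_apply]
          exact Finset.sum_congr rfl fun j _ => mul_comm _ _
      _ = 1 := hustar
  have htr : (Zᴴ * Z * K).trace = star u ⬝ᵥ K *ᵥ u := by
    rw [hZZ]
    simp only [Matrix.trace, Matrix.diag_apply, Matrix.mul_apply, Matrix.of_apply,
      dotProduct, Matrix.mulVec, Pi.star_apply, Finset.mul_sum, Finset.sum_mul]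
    rw [Finset.sum_comm]
    refine Finset.sum_congr rfl fun l _ => Finset.sum_congr rfl fun j _ => by ring
  constructor
  · refine ⟨Z, htr1, ?_⟩
    rw [htr, hKu]
    rw [dotProduct_smul, hustar]
    rw [hnorm_eq]
    simp [Complex.real_smul]
  · rintro r ⟨W, hW, hr⟩
    rw [hr]
    exact upper_bound K W hW


variable {a b : ℕ}

lemma kron_one_conjT (A : Matrix (Fin a) (Fin a) ℂ) :
    (A ⊗ₖ (1 : Matrix (Fin b) (Fin b) ℂ))ᴴ = Aᴴ ⊗ₖ 1 := by
  ext ⟨i, k⟩ ⟨j, l⟩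
  by_cases h : k = l
  · simp [Matrix.conjTranspose_apply, Matrix.kroneckerMap_apply, Matrix.one_apply, h]
  · simp [Matrix.conjTranspose_apply, Matrix.kroneckerMap_apply, Matrix.one_apply, h, Ne.symm h]

lemma vk_eval (M : Matrix (Fin a × Fin b) (Fin a × Fin b) ℂ) (v : Fin a → ℂ) (k : Fin b) :
    star (fun p : Fin a × Fin b => if p.2 = k then v p.1 else 0) ⬝ᵥ
      M *ᵥ (fun p : Fin a × Fin b => if p.2 = k then v p.1 else 0)
    = ∑ i, ∑ j, star (v i) * (M (i, k) (j, k) * v j) := by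
  simp only [dotProduct, Matrix.mulVec, Pi.star_apply, Fintype.sum_prod_type,
    apply_ite (star : ℂ → ℂ), star_zero, ite_mul, zero_mul, mul_ite, mul_zero,
    Finset.mul_sum, Finset.sum_ite_eq', Finset.mem_univ, if_true]
  refine Finset.sum_congr rfl fun i _ => ?_
  rw [Finset.sum_comm]
  simp [Finset.sum_ite_eq']

lemma trace_kron (W : Matrix (Fin a) (Fin a) ℂ)
    (M : Matrix (Fin a × Fin b) (Fin a × Fin b) ℂ) :
    ((W ⊗ₖ (1 : Matrix (Fin b) (Fin b) ℂ)) * M).trace = (W * ptraceB M).trace := by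
  simp only [Matrix.trace, Matrix.diag_apply, Matrix.mul_apply, ptraceB, Matrix.of_apply,
    Fintype.sum_prod_type, Matrix.kroneckerMap_apply, Matrix.one_apply, ite_mul, one_mul,
    zero_mul, mul_ite, mul_zero, mul_one, Finset.sum_ite_eq, Finset.sum_ite_eq',
    Finset.mem_univ, if_true, Finset.mul_sum]
  refine Finset.sum_congr rfl fun i _ => ?_
  rw [Finset.sum_comm]

lemma ptraceB_posSemidef {M : Matrix (Fin a × Fin b) (Fin a × Fin b) ℂ}
    (hM : M.PosSemidef) : (ptraceB M).PosSemidef := by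
  refine Matrix.PosSemidef.of_dotProduct_mulVec_nonneg ?_ ?_
  · ext i j
    simp only [Matrix.conjTranspose_apply, ptraceB, Matrix.of_apply, star_sum]
    refine Finset.sum_congr rfl fun k _ => ?_
    have := congrFun (congrFun hM.1 (i, k)) (j, k)
    simpa [Matrix.conjTranspose_apply] using this
  · intro v
    have key : star v ⬝ᵥ (ptraceB M) *ᵥ v
        = ∑ k : Fin b, star (fun p : Fin a × Fin b => if p.2 = k then v p.1 else 0) ⬝ᵥ
            M *ᵥ (fun p : Fin a × Fin b => if p.2 = k then v p.1 else 0) := by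
      simp only [vk_eval]
      simp only [dotProduct, Matrix.mulVec, ptraceB, Matrix.of_apply, Pi.star_apply,
        Finset.mul_sum, Finset.sum_mul]
      calc ∑ x : Fin a, ∑ y : Fin a, ∑ k : Fin b, star (v x) * (M (x, k) (y, k) * v y)
          = ∑ x : Fin a, ∑ k : Fin b, ∑ y : Fin a, star (v x) * (M (x, k) (y, k) * v y) :=
            Finset.sum_congr rfl fun x _ => Finset.sum_comm
        _ = ∑ k : Fin b, ∑ x : Fin a, ∑ y : Fin a, star (v x) * (M (x, k) (y, k) * v y) :=
            Finset.sum_comm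
    rw [key]
    exact Finset.sum_nonneg fun k _ => hM.dotProduct_mulVec_nonneg _


variable {a b : ℕ}

lemma smul_posSemidef {m : ℕ} {A : Matrix (Fin m) (Fin m) ℂ} (hA : A.PosSemidef)
    {c : ℝ} (hc : 0 ≤ c) : (((c : ℝ) : ℂ) • A).PosSemidef := by
  refine Matrix.PosSemidef.of_dotProduct_mulVec_nonneg ?_ fun x => ?_
  · show (((c : ℝ) : ℂ) • A)ᴴ = _
    rw [Matrix.conjTranspose_smul, hA.1]
    congr 1
    simp [Complex.star_def, Complex.conj_ofReal]
  · rw [Matrix.smul_mulVec, dotProduct_smul, smul_eq_mul]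
    exact mul_nonneg (by exact_mod_cast Complex.zero_le_real.mpr hc) (hA.dotProduct_mulVec_nonneg x)

lemma smul_posDef {m : ℕ} {A : Matrix (Fin m) (Fin m) ℂ} (hA : A.PosDef)
    {c : ℝ} (hc : 0 < c) : (((c : ℝ) : ℂ) • A).PosDef := by
  refine Matrix.PosDef.of_dotProduct_mulVec_pos ?_ fun x hx => ?_
  · show (((c : ℝ) : ℂ) • A)ᴴ = _
    rw [Matrix.conjTranspose_smul, hA.1]
    congr 1
    simp [Complex.star_def, Complex.conj_ofReal]
  · rw [Matrix.smul_mulVec, dotProduct_smul, smul_eq_mul]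
    exact mul_pos (by exact_mod_cast Complex.zero_lt_real.mpr hc) (hA.dotProduct_mulVec_pos hx)

set_option maxHeartbeats 1000000 in
lemma reduce (Γ X : Matrix (Fin a × Fin b) (Fin a × Fin b) ℂ) (hΓ : Γ.PosDef)
    (ZR : Matrix (Fin a) (Fin a) ℂ) (hZR : IsUnit ZR) :
    (((ZR ⊗ₖ (1 : Matrix (Fin b) (Fin b) ℂ)) * X * (ZR ⊗ₖ (1 : Matrix (Fin b) (Fin b) ℂ))ᴴ) *
        ((ZR ⊗ₖ (1 : Matrix (Fin b) (Fin b) ℂ)) * Γ * (ZR ⊗ₖ (1 : Matrix (Fin b) (Fin b) ℂ))ᴴ)⁻¹ *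
        ((ZR ⊗ₖ (1 : Matrix (Fin b) (Fin b) ℂ)) * X * (ZR ⊗ₖ (1 : Matrix (Fin b) (Fin b) ℂ))ᴴ)).trace
      = (((ZRᴴ * ZR) ⊗ₖ (1 : Matrix (Fin b) (Fin b) ℂ)) * (X * Γ⁻¹ * X)).trace := by
  set Z : Matrix (Fin a × Fin b) (Fin a × Fin b) ℂ := ZR ⊗ₖ (1 : Matrix (Fin b) (Fin b) ℂ)
    with hZdef
  have hdZR : IsUnit ZR.det := (Matrix.isUnit_iff_isUnit_det ZR).mp hZR
  have hdZ : IsUnit Z.det := by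
    rw [hZdef, Matrix.det_kronecker, Matrix.det_one, one_pow, mul_one]
    simpa using hdZR.pow b
  have hdZh : IsUnit Zᴴ.det := by
    rw [Matrix.det_conjTranspose]
    exact hdZ.star
  have e1 : (Z * Γ * Zᴴ)⁻¹ = Zᴴ⁻¹ * (Γ⁻¹ * Z⁻¹) := by
    rw [Matrix.mul_inv_rev, Matrix.mul_inv_rev]
  have c1 : Zᴴ * Zᴴ⁻¹ = 1 := Matrix.mul_nonsing_inv _ hdZh
  have c2 : Z⁻¹ * Z = 1 := Matrix.nonsing_inv_mul _ hdZ
  have e2 : (Z * X * Zᴴ) * (Z * Γ * Zᴴ)⁻¹ * (Z * X * Zᴴ) = Z * (X * Γ⁻¹ * X) * Zᴴ := by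
    rw [e1]
    simp only [Matrix.mul_assoc]
    rw [← Matrix.mul_assoc Zᴴ Zᴴ⁻¹, c1, Matrix.one_mul, ← Matrix.mul_assoc Z⁻¹ Z, c2,
      Matrix.one_mul]
  rw [e2, Matrix.trace_mul_cycle Z (X * Γ⁻¹ * X) Zᴴ]
  congr 1
  rw [hZdef]
  rw [show (ZR ⊗ₖ (1 : Matrix (Fin b) (Fin b) ℂ))ᴴ = ZRᴴ ⊗ₖ 1 from ?_]
  · rw [← Matrix.mul_kronecker_mul, Matrix.one_mul]
  · ext ⟨i, k⟩ ⟨j, l⟩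
    by_cases h : k = l
    · simp [Matrix.conjTranspose_apply, Matrix.kroneckerMap_apply, Matrix.one_apply, h]
    · simp [Matrix.conjTranspose_apply, Matrix.kroneckerMap_apply, Matrix.one_apply, h,
        Ne.symm h]

end RLDAux

open RLDAux in
/-- **Sup–trace characterization of the operator norm, and the RLD Fisher information
formula for channels.** (i) For positive semidefinite `K`, the supremum of
`Tr[ZᴴZ K]` over `Z` with `Tr[ZᴴZ] = 1` equals `‖K‖∞` and is attained. (ii) For positive
definite `Γ` on a bipartite space and Hermitian `X`, the supremum over invertible `Z_R`
with `Tr[Z_RᴴZ_R] = 1` of `Tr[(Z X Zᴴ)(Z Γ Zᴴ)⁻¹(Z X Zᴴ)]`, where `Z = Z_R ⊗ I_B`,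
equals `‖Tr_B[X Γ⁻¹ X]‖∞`. -/
theorem opNorm_sup_trace_and_rld_channel {n a b : ℕ} (hn : 0 < n) (ha : 0 < a) (hb : 0 < b)
    (K : Matrix (Fin n) (Fin n) ℂ) (hK : K.PosSemidef)
    (Γ X : Matrix (Fin a × Fin b) (Fin a × Fin b) ℂ)
    (hΓ : Γ.PosDef) (hX : X.IsHermitian) :
    IsGreatest {r : ℝ | ∃ Z : Matrix (Fin n) (Fin n) ℂ,
        (Zᴴ * Z).trace = 1 ∧ r = ((Zᴴ * Z * K).trace).re}
      (opNorm K) ∧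
    IsLUB {r : ℝ | ∃ ZR : Matrix (Fin a) (Fin a) ℂ, IsUnit ZR ∧ (ZRᴴ * ZR).trace = 1 ∧
        r = ((((ZR ⊗ₖ (1 : Matrix (Fin b) (Fin b) ℂ)) * X *
                (ZR ⊗ₖ (1 : Matrix (Fin b) (Fin b) ℂ))ᴴ) *
              ((ZR ⊗ₖ (1 : Matrix (Fin b) (Fin b) ℂ)) * Γ *
                (ZR ⊗ₖ (1 : Matrix (Fin b) (Fin b) ℂ))ᴴ)⁻¹ *
              ((ZR ⊗ₖ (1 : Matrix (Fin b) (Fin b) ℂ)) * X *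
                (ZR ⊗ₖ (1 : Matrix (Fin b) (Fin b) ℂ))ᴴ)).trace).re}
      (opNorm (ptraceB (X * Γ⁻¹ * X))) := by
  constructor
  · exact isGreatest_part1 hn K hK
  · -- Part (ii)
    set K' : Matrix (Fin a) (Fin a) ℂ := ptraceB (X * Γ⁻¹ * X) with hK'def
    have hXΓX : (X * Γ⁻¹ * X).PosSemidef := by
      have h := hΓ.inv.posSemidef.mul_mul_conjTranspose_same X
      rwa [hX.eq] at h
    have hK' : K'.PosSemidef := ptraceB_posSemidef hXΓX
    have hgreat := isGreatest_part1 ha K' hK'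
    -- every element of the set equals Re Tr[ZRᴴZR K']
    have hval : ∀ ZR : Matrix (Fin a) (Fin a) ℂ, IsUnit ZR →
        ((((ZR ⊗ₖ (1 : Matrix (Fin b) (Fin b) ℂ)) * X *
                (ZR ⊗ₖ (1 : Matrix (Fin b) (Fin b) ℂ))ᴴ) *
              ((ZR ⊗ₖ (1 : Matrix (Fin b) (Fin b) ℂ)) * Γ *
                (ZR ⊗ₖ (1 : Matrix (Fin b) (Fin b) ℂ))ᴴ)⁻¹ *
              ((ZR ⊗ₖ (1 : Matrix (Fin b) (Fin b) ℂ)) * X *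
                (ZR ⊗ₖ (1 : Matrix (Fin b) (Fin b) ℂ))ᴴ)).trace)
          = (ZRᴴ * ZR * K').trace := by
      intro ZR hZR
      rw [reduce Γ X hΓ ZR hZR, trace_kron, hK'def]
    constructor
    · -- upper bound
      rintro r ⟨ZR, hZRu, hZRt, hr⟩
      rw [hr, hval ZR hZRu]
      exact upper_bound K' ZR hZRt
    · -- least upper bound
      intro c hc
      obtain ⟨⟨Z₀, hZ₀t, hZ₀v⟩, _⟩ := hgreat
      set L : ℝ := opNorm K' with hL
      set μ : ℝ := (K'.trace).re with hμ
      have hane : ((a : ℕ) : ℂ) ≠ 0 := Nat.cast_ne_zero.mpr ha.ne'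
      have key : ∀ t : ℝ, 0 < t → t ≤ 1 → (1 - t) * L + (t / a) * μ ≤ c := by
        intro t ht0 ht1
        set ρt : Matrix (Fin a) (Fin a) ℂ :=
          ((1 - t : ℝ) : ℂ) • (Z₀ᴴ * Z₀) + ((t / a : ℝ) : ℂ) • 1 with hρt
        have hρ₀ : (Z₀ᴴ * Z₀).PosSemidef := Matrix.posSemidef_conjTranspose_mul_self Z₀
        have hρtpd : ρt.PosDef := by
          refine Matrix.PosDef.posSemidef_add (smul_posSemidef hρ₀ (by linarith)) ?_
          exact smul_posDef Matrix.PosDef.one (by positivity)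
        set ZR : Matrix (Fin a) (Fin a) ℂ := open scoped MatrixOrder in CFC.sqrt ρt with hZRdef
        have hherm : ZRᴴ = ZR := open scoped MatrixOrder in
          (Matrix.nonneg_iff_posSemidef.mp (CFC.sqrt_nonneg ρt)).1
        have hsq : ZRᴴ * ZR = ρt := by
          rw [hherm]; exact open scoped MatrixOrder in CFC.sqrt_mul_sqrt_self ρt hρtpd.posSemidef.nonneg
        have hZRu : IsUnit ZR := by
          rw [Matrix.isUnit_iff_isUnit_det, isUnit_iff_ne_zero]
          intro h0
          have hd : ρt.det = ZRᴴ.det * ZR.det := by rw [← hsq, Matrix.det_mul]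
          rw [h0, mul_zero] at hd
          exact hρtpd.det_pos.ne' hd
        have htrρt : ρt.trace = 1 := by
          rw [hρt, Matrix.trace_add, Matrix.trace_smul, Matrix.trace_smul, hZ₀t,
            Matrix.trace_one]
          simp only [smul_eq_mul, mul_one, Fintype.card_fin]
          push_cast; rw [div_mul_cancel₀ _ hane]; ring
        have hvaleq : ((ρt * K').trace).re = (1 - t) * L + (t / a) * μ := by
          rw [hρt, Matrix.add_mul, Matrix.smul_mul, Matrix.smul_mul, Matrix.trace_add,
            Matrix.trace_smul, Matrix.trace_smul, Matrix.one_mul]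
          simp only [smul_eq_mul, Complex.add_re, Complex.re_ofReal_mul]
          rw [hμ, hZ₀v]
        have hmem : (1 - t) * L + (t / a) * μ ∈
            {r : ℝ | ∃ ZR : Matrix (Fin a) (Fin a) ℂ, IsUnit ZR ∧ (ZRᴴ * ZR).trace = 1 ∧
              r = ((((ZR ⊗ₖ (1 : Matrix (Fin b) (Fin b) ℂ)) * X *
                      (ZR ⊗ₖ (1 : Matrix (Fin b) (Fin b) ℂ))ᴴ) *
                    ((ZR ⊗ₖ (1 : Matrix (Fin b) (Fin b) ℂ)) * Γ *
                      (ZR ⊗ₖ (1 : Matrix (Fin b) (Fin b) ℂ))ᴴ)⁻¹ *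
                    ((ZR ⊗ₖ (1 : Matrix (Fin b) (Fin b) ℂ)) * X *
                      (ZR ⊗ₖ (1 : Matrix (Fin b) (Fin b) ℂ))ᴴ)).trace).re} := by
          refine ⟨ZR, hZRu, by rw [hsq]; exact htrρt, ?_⟩
          rw [hval ZR hZRu, Matrix.mul_assoc, ← Matrix.mul_assoc, hsq, hvaleq]
        exact hc hmem
      -- conclude L ≤ c
      by_cases hLμ : L ≤ μ / a
      · have h1 := key 1 one_pos le_rfl
        have : μ / a ≤ c := by
          have := h1
          ring_nf at this ⊢
          linarith [this]
        linarith
      · push_neg at hLμ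
        set D : ℝ := L - μ / a with hD
        have hD0 : 0 < D := by rw [hD]; linarith
        refine le_of_forall_pos_le_add fun ε hε => ?_
        set t : ℝ := min 1 (ε / D) with htdef
        have ht0 : 0 < t := lt_min one_pos (by positivity)
        have ht1 : t ≤ 1 := min_le_left _ _
        have htD : t * D ≤ ε := by
          calc t * D ≤ (ε / D) * D := by
                exact mul_le_mul_of_nonneg_right (min_le_right _ _) hD0.le
            _ = ε := by field_simp
        have hkey := key t ht0 ht1
        have heq : (1 - t) * L + (t / a) * μ = L - t * D := by
          rw [hD]; field_simp; ring
        rw [heq] at hkey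
        linarith
end
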